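/- Let ν > 0, ω > 0, λ ∈ ℝ, set a = √(ν/ω), and define f(x) = (2λ²/(3ν))·(1 − cosh(a·x/2)) and h(x) = (λ³/(3√(νω)))·sinh(a·x/2). Then for every x ∈ ℝ, ν · (d²/dx²)(2·f·h)(x) − ω · (d⁴/dx⁴)(2·f·h)(x) = (λ⁵/12) · √(ν/ω³) · sinh(a·x/2), where d²/dx² and d⁴/dx⁴ denote the second and fourth classical derivatives of the product function x ↦ 2·f(x)·h(x). -/
import Mathlib


open Real

private lemma hasDerivAt_sinh_aux (A c x : ℝ) :
    HasDerivAt (fun y => A * Real.sinh (c * y)) (A * c * Real.cosh (c * x)) x := by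
  have h1 : HasDerivAt (fun y : ℝ => c * y) c x := by
    simpa using (hasDerivAt_id x).const_mul c
  have h2 := (Real.hasDerivAt_sinh (c * x)).comp x h1
  simpa [mul_comm, mul_assoc, mul_left_comm] using h2.const_mul A

private lemma hasDerivAt_cosh_aux (A c x : ℝ) :
    HasDerivAt (fun y => A * Real.cosh (c * y)) (A * c * Real.sinh (c * x)) x := by
  have h1 : HasDerivAt (fun y : ℝ => c * y) c x := by
    simpa using (hasDerivAt_id x).const_mul c
  have h2 := (Real.hasDerivAt_cosh (c * x)).comp x h1
  simpa [mul_comm, mul_assoc, mul_left_comm] using h2.const_mul A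

private lemma derivS (P Q c : ℝ) :
    deriv (fun x => P * Real.sinh (c * x) + Q * Real.sinh (2 * c * x)) =
      fun x => P * c * Real.cosh (c * x) + Q * (2 * c) * Real.cosh (2 * c * x) := by
  funext x
  exact ((hasDerivAt_sinh_aux P c x).add (hasDerivAt_sinh_aux Q (2 * c) x)).deriv

private lemma derivC (P Q c : ℝ) :
    deriv (fun x => P * Real.cosh (c * x) + Q * Real.cosh (2 * c * x)) =
      fun x => P * c * Real.sinh (c * x) + Q * (2 * c) * Real.sinh (2 * c * x) := by
  funext x
  exact ((hasDerivAt_cosh_aux P c x).add (hasDerivAt_cosh_aux Q (2 * c) x)).deriv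

theorem klein_gordon_phi3 (ν ω lam : ℝ) (hν : 0 < ν) (hω : 0 < ω)
    (a : ℝ) (ha : a = Real.sqrt (ν / ω)) (f h : ℝ → ℝ)
    (hf : f = fun x : ℝ => 2 * lam ^ 2 / (3 * ν) * (1 - Real.cosh (a * x / 2)))
    (hh : h = fun x : ℝ => lam ^ 3 / (3 * Real.sqrt (ν * ω)) * Real.sinh (a * x / 2)) :
    ∀ x : ℝ,
      ν * iteratedDeriv 2 (fun y => 2 * f y * h y) x -
          ω * iteratedDeriv 4 (fun y => 2 * f y * h y) x =
        lam ^ 5 / 12 * Real.sqrt (ν / ω ^ 3) * Real.sinh (a * x / 2) := by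
  intro x
  obtain ⟨sν, hsν, rfl⟩ : ∃ s, 0 < s ∧ ν = s ^ 2 :=
    ⟨Real.sqrt ν, Real.sqrt_pos.mpr hν, (Real.sq_sqrt hν.le).symm⟩
  obtain ⟨sω, hsω, rfl⟩ : ∃ s, 0 < s ∧ ω = s ^ 2 :=
    ⟨Real.sqrt ω, Real.sqrt_pos.mpr hω, (Real.sq_sqrt hω.le).symm⟩
  have hmul : Real.sqrt (sν ^ 2 * sω ^ 2) = sν * sω := by
    rw [show sν ^ 2 * sω ^ 2 = (sν * sω) ^ 2 by ring, Real.sqrt_sq (by positivity)]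
  have hdiv : Real.sqrt (sν ^ 2 / sω ^ 2) = sν / sω := by
    rw [show sν ^ 2 / sω ^ 2 = (sν / sω) ^ 2 by ring, Real.sqrt_sq (by positivity)]
  have hdiv3 : Real.sqrt (sν ^ 2 / (sω ^ 2) ^ 3) = sν / sω ^ 3 := by
    rw [show sν ^ 2 / (sω ^ 2) ^ 3 = (sν / sω ^ 3) ^ 2 by ring,
      Real.sqrt_sq (by positivity)]
  rw [hdiv] at ha
  set P : ℝ := 4 * lam ^ 5 / (9 * sν ^ 2 * (sν * sω)) with hP
  set Q : ℝ := -(2 * lam ^ 5) / (9 * sν ^ 2 * (sν * sω)) with hQ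
  have hF : (fun y => 2 * f y * h y) =
      fun y => P * Real.sinh (a / 2 * y) + Q * Real.sinh (2 * (a / 2) * y) := by
    funext y
    rw [hf, hh]
    simp only
    rw [hmul, show a * y / 2 = a / 2 * y by ring,
      show (2 : ℝ) * (a / 2) * y = 2 * (a / 2 * y) by ring, Real.sinh_two_mul,
      hP, hQ]
    ring
  rw [hF]
  simp only [show (4 : ℕ) = 3 + 1 by rfl, show (3 : ℕ) = 2 + 1 by rfl,
    show (2 : ℕ) = 1 + 1 by rfl, iteratedDeriv_succ, iteratedDeriv_zero,
    derivS, derivC]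
  rw [show a * x / 2 = a / 2 * x by ring, hdiv3]
  have ha2 : a ^ 2 = sν ^ 2 / sω ^ 2 := by
    rw [ha]; ring
  have hω0 : sω ≠ 0 := ne_of_gt hsω
  have hν0 : sν ≠ 0 := ne_of_gt hsν
  have haval : a = sν / sω := ha
  rw [haval, hP, hQ]
  field_simp
  ring
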